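/- For n ≥ 4 and any index 1 ≤ i ≤ n, if a quadratic binomial q = q_{g_1} q_{g_2} − q_{h_1} q_{h_2} (with g_1,g_2,h_1,h_2 ∈ Z2^n) satisfies g_1^{(i)} = g_2^{(i)} = h_1^{(i)} = h_2^{(i)} = j for some fixed j ∈ Z2, then q ∈ ker φ_n if and only if π_i(q) ∈ ker φ_{n-1}, where π_i deletes the i-th index from every variable. -/
import Mathlib


open MvPolynomial

noncomputable def phi (n : ℕ) :
    MvPolynomial (Fin n → ZMod 2) ℂ →ₐ[ℂ] MvPolynomial (ZMod 2 × Fin (n + 1)) ℂ :=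
  aeval fun σ => (∏ i : Fin n, X (σ i, Fin.castSucc i)) * X (∑ i, σ i, Fin.last n)

/-- The projection `π_i` deleting the `i`-th index of every variable: it sends the variable
`q_σ` (with `σ ∈ (ℤ/2)^(m+1)`) to `q_{σ ∘ i.succAbove}` (with index tuple in `(ℤ/2)^m`). -/
noncomputable def proj (m : ℕ) (i : Fin (m + 1)) :
    MvPolynomial (Fin (m + 1) → ZMod 2) ℂ →ₐ[ℂ] MvPolynomial (Fin m → ZMod 2) ℂ :=
  aeval fun σ => X (σ ∘ i.succAbove)

/-- The "re-insertion" map on the target polynomial rings. -/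
noncomputable def theta (m : ℕ) (i : Fin (m + 1)) (j : ZMod 2) :
    MvPolynomial (ZMod 2 × Fin (m + 1)) ℂ →ₐ[ℂ] MvPolynomial (ZMod 2 × Fin (m + 2)) ℂ :=
  aeval fun p => Fin.lastCases
    (X (p.1 + j, Fin.last (m + 1)) * X (j, Fin.castSucc i))
    (fun k => X (p.1, Fin.castSucc (i.succAbove k))) p.2

/-- A left inverse for `theta`. -/
noncomputable def psi (m : ℕ) (i : Fin (m + 1)) (j : ZMod 2) :
    MvPolynomial (ZMod 2 × Fin (m + 2)) ℂ →ₐ[ℂ] MvPolynomial (ZMod 2 × Fin (m + 1)) ℂ :=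
  aeval fun p =>
    if p.2 = Fin.last (m + 1) then X (p.1 + j, Fin.last m)
    else if p.2 = Fin.castSucc i then 1
    else X (p.1, i.predAbove p.2)

lemma psi_theta (m : ℕ) (i : Fin (m + 1)) (j : ZMod 2) (x : MvPolynomial (ZMod 2 × Fin (m + 1)) ℂ) :
    psi m i j (theta m i j x) = x := by
  have hjj : j + j = 0 := by revert j; decide
  have : (psi m i j).comp (theta m i j) = AlgHom.id ℂ _ := by
    apply MvPolynomial.algHom_ext
    rintro ⟨g, c⟩
    induction c using Fin.lastCases with
    | last =>
      simp [theta, psi, (Fin.castSucc_lt_last i).ne,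
        add_assoc, hjj]
    | cast k =>
      have h1 : (Fin.castSucc (i.succAbove k)) ≠ Fin.last (m + 1) :=
        (Fin.castSucc_lt_last _).ne
      have h2 : (Fin.castSucc (i.succAbove k)) ≠ Fin.castSucc i := by
        simp [Fin.castSucc_inj, Fin.succAbove_ne i k]
      have h3 : i.predAbove (Fin.castSucc (i.succAbove k)) = Fin.castSucc k := by
        rw [← Fin.castSucc_succAbove_castSucc, Fin.predAbove_succAbove]
      simp [theta, psi, h1, h2, h3]
  calc psi m i j (theta m i j x) = ((psi m i j).comp (theta m i j)) x := rfl
    _ = x := by rw [this]; rfl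

lemma key (m : ℕ) (i : Fin (m + 1)) (j : ZMod 2) (σ : Fin (m + 1) → ZMod 2) (hσ : σ i = j) :
    theta m i j (phi m (proj m i (X σ))) = phi (m + 1) (X σ) := by
  simp only [phi, proj, theta, aeval_X, map_mul, map_prod, Function.comp]
  rw [Fin.prod_univ_succAbove (fun k : Fin (m + 1) => X ((σ k, Fin.castSucc k) : ZMod 2 × Fin (m + 2))) i,
    Fin.sum_univ_succAbove σ i, hσ]
  simp only [Fin.lastCases_last, Fin.lastCases_castSucc]
  rw [add_comm j]
  ring

theorem stmt_12 (m : ℕ) (hm : 4 ≤ m + 1) (i : Fin (m + 1)) (j : ZMod 2)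
    (g₁ g₂ h₁ h₂ : Fin (m + 1) → ZMod 2)
    (hfix : g₁ i = j ∧ g₂ i = j ∧ h₁ i = j ∧ h₂ i = j) :
    X g₁ * X g₂ - X h₁ * X h₂ ∈ RingHom.ker (phi (m + 1)).toRingHom ↔
      proj m i (X g₁ * X g₂ - X h₁ * X h₂) ∈ RingHom.ker (phi m).toRingHom := by
  obtain ⟨h1, h2, h3, h4⟩ := hfix
  have main : theta m i j (phi m (proj m i (X g₁ * X g₂ - X h₁ * X h₂))) =
      phi (m + 1) (X g₁ * X g₂ - X h₁ * X h₂) := by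
    simp only [map_sub, map_mul, key m i j g₁ h1, key m i j g₂ h2, key m i j h₁ h3,
      key m i j h₂ h4]
  simp only [RingHom.mem_ker, AlgHom.toRingHom_eq_coe, RingHom.coe_coe]
  constructor
  · intro h
    have : theta m i j (phi m (proj m i (X g₁ * X g₂ - X h₁ * X h₂))) = 0 := by rw [main, h]
    have := congrArg (psi m i j) this
    rwa [psi_theta, map_zero] at this
  · intro h
    rw [← main, h, map_zero]
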